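/- For every n ≥ 1, the evaluation of H_n at 1 equals p'_{n−1}; moreover, in the ring of formal power series in y over ℤ: (1 − y² − y³) · ∑_{n≥0} p'_n y^n = 1 + 2y + 2y². -/

import Mathlib

open Polynomial

/-- The maximal cube polynomials `H n` of the matchable Lucas cubes. -/
noncomputable def H : ℕ → Polynomial ℤ
  | 0 => 1
  | 1 => X
  | 2 => 2 * X
  | 3 => 3 * X
  | 4 => X + 2 * X ^ 2
  | (n + 5) => X * H (n + 3) + X * H (n + 2)

/-- The (1,2,3)-Padovan numbers. -/
def p' : ℕ → ℤ
  | 0 => 1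
  | 1 => 2
  | 2 => 3
  | (n + 3) => p' (n + 1) + p' n

lemma eval_H_one : ∀ n : ℕ, (H (n + 1)).eval 1 = p' n := by
  intro n
  induction n using Nat.strong_induction_on with
  | _ n ih =>
    match n with
    | 0 => simp [H, p']
    | 1 => simp [H, p']
    | 2 => simp [H, p']
    | 3 => simp [H, p']
    | (m + 4) =>
      have h1 := ih (m + 2) (by omega)
      have h2 := ih (m + 1) (by omega)
      show (H (m + 5)).eval 1 = p' (m + 4)
      rw [show H (m + 5) = X * H (m + 3) + X * H (m + 2) from rfl,
        show p' (m + 4) = p' (m + 2) + p' (m + 1) from rfl]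
      simp [h1, h2]

theorem eval_H_one_and_gf_padovan :
    (∀ n : ℕ, 1 ≤ n → (H n).eval 1 = p' (n - 1)) ∧
    (1 - PowerSeries.X ^ 2 - PowerSeries.X ^ 3) * PowerSeries.mk p'
      = 1 + 2 * PowerSeries.X + 2 * PowerSeries.X ^ 2 := by
  constructor
  · intro n hn
    obtain ⟨m, rfl⟩ := Nat.exists_eq_add_of_le hn
    rw [Nat.add_comm]
    simpa using eval_H_one m
  · ext n
    rw [sub_mul, sub_mul, one_mul]
    have h2 : (2 : PowerSeries ℤ) = PowerSeries.C (2 : ℤ) := by simp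
    rw [h2]
    simp only [map_sub, map_add, PowerSeries.coeff_mk, PowerSeries.coeff_X_pow_mul',
      PowerSeries.coeff_C_mul, PowerSeries.coeff_C]
    match n with
    | 0 => simp [p']
    | 1 => simp [p', PowerSeries.coeff_X, PowerSeries.coeff_X_pow]
    | 2 => simp [p', PowerSeries.coeff_X, PowerSeries.coeff_X_pow]
    | (m + 3) =>
      have : p' (m + 3) = p' (m + 1) + p' m := rfl
      rw [if_pos (by omega), if_pos (by omega), show m + 3 - 2 = m + 1 from by omega,
        show m + 3 - 3 = m from by omega, this]
      have h3 : (m : ℕ) + 3 ≠ 0 := by omega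
      simp [PowerSeries.coeff_one, PowerSeries.coeff_X, PowerSeries.coeff_X_pow, h3]
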